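/- A phase-flip on qubit 5 of the encoded state produces error syndrome 0001 and leaves the data unchanged: for every c = (c(0), c(1)) ∈ ℂ² there is a nonzero complex scalar α independent of c such that T(S₅(f(c))) = α · |0001⟩ ⊗ (c(0)|0⟩ + c(1)|1⟩). -/

import Mathlib

open scoped BigOperators

noncomputable section

/-- The 5-qubit state space `V₅ = (Fin 5 → Fin 2) → ℂ ≅ ℂ^32` with the standard
Hermitian inner product. -/
abbrev V5 : Type := EuclideanSpace ℂ (Fin 5 → Fin 2)

/-- The phase exponent `γ(x,y) = x(y₀+y₁+y₂) + y₀y₁ + y₀y₃ + y₁y₄ + y₂y₃ + y₂y₄ + y₃y₄`,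
read modulo 2 via `(-1)^·`. -/
def gam (x : Fin 2) (y : Fin 5 → Fin 2) : ℕ :=
  x.val * ((y 0).val + (y 1).val + (y 2).val)
    + (y 0).val * (y 1).val + (y 0).val * (y 3).val + (y 1).val * (y 4).val
    + (y 2).val * (y 3).val + (y 2).val * (y 4).val + (y 3).val * (y 4).val

/-- The graph-code encoding `f : ℂ² → V₅`, `f(c)(y) = Σ_x (−1)^{γ(x,y)} c(x)`
(normalization factors omitted). -/
def enc (c : Fin 2 → ℂ) : V5 := WithLp.toLp 2 (fun y => ∑ x : Fin 2, (-1 : ℂ) ^ gam x y * c x)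

/-- The decoding phase exponent `θ`, with `z = (l₀, l₁, l₃, l₄, x̂)`. -/
def theta (y z : Fin 5 → Fin 2) : ℕ :=
  (z 4).val * ((y 0).val + (y 1).val + (y 2).val)
    + (y 0).val * (y 1).val + (y 0).val * (y 3).val + (y 1).val * (y 4).val
    + (y 2).val * (y 3).val + (y 2).val * (y 4).val + (y 3).val * (y 4).val
    + (y 0).val * (z 0).val + (y 1).val * (z 1).val + (y 3).val * (z 2).val
    + (y 4).val * (z 3).val

/-- The graph decoding operator `T : V₅ → V₅`,
`T|y⟩ = Σ_{l₀l₁l₃l₄, x̂} (−1)^θ |l₀l₁l₃l₄x̂⟩`. -/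
def dec (ψ : V5) : V5 := WithLp.toLp 2 (fun z => ∑ y : Fin 5 → Fin 2, (-1 : ℂ) ^ theta y z * ψ y)

/-- The product state `|s₀s₁s₂s₃⟩ ⊗ (a|0⟩ + b|1⟩)` in `V₅`: four syndrome qubits
followed by one data qubit. -/
def synData (s : Fin 4 → Fin 2) (a b : ℂ) : V5 :=
  WithLp.toLp 2 (fun y => (if y 0 = s 0 ∧ y 1 = s 1 ∧ y 2 = s 2 ∧ y 3 = s 3 then (1 : ℂ) else 0)
    * (if y 4 = 0 then a else b))

/-- Bit-flip (Pauli `σ_X`) on qubit `i` (0-indexed: qubit `j` of the paper is `i = j - 1`). -/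
def bitFlip (i : Fin 5) (ψ : V5) : V5 := WithLp.toLp 2 (fun y => ψ (Function.update y i (1 - y i)))

/-- Phase-flip (Pauli `σ_Z`) on qubit `i` (0-indexed). -/
def phaseFlip (i : Fin 5) (ψ : V5) : V5 := WithLp.toLp 2 (fun y => (-1 : ℂ) ^ (y i).val * ψ y)


def pi5Equiv : (Fin 2 × Fin 2 × Fin 2 × Fin 2 × Fin 2) ≃ (Fin 5 → Fin 2) where
  toFun p := ![p.1, p.2.1, p.2.2.1, p.2.2.2.1, p.2.2.2.2]
  invFun z := (z 0, z 1, z 2, z 3, z 4)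
  left_inv p := rfl
  right_inv z := by
    funext i; fin_cases i <;> rfl

lemma sum_pi5 (g : (Fin 5 → Fin 2) → ℂ) :
    ∑ y : Fin 5 → Fin 2, g y
      = ∑ a : Fin 2, ∑ b : Fin 2, ∑ c : Fin 2, ∑ d : Fin 2, ∑ e : Fin 2,
          g ![a, b, c, d, e] := by
  rw [← pi5Equiv.sum_comp]
  simp only [Fintype.sum_prod_type]
  rfl

lemma eta5 (z : Fin 5 → Fin 2) : z = ![z 0, z 1, z 2, z 3, z 4] := by
  funext i; fin_cases i <;> rfl

lemma synData_apply (a b : ℂ) (x0 x1 x2 x3 x4 : Fin 2) :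
    synData ![0, 0, 0, 1] a b ![x0, x1, x2, x3, x4]
      = (if x0 = 0 ∧ x1 = 0 ∧ x2 = 0 ∧ x3 = 1 then (1 : ℂ) else 0)
          * (if x4 = 0 then a else b) := rfl

set_option maxHeartbeats 2000000 in
/-- A phase-flip on qubit 5 produces syndrome `0001` and leaves the data unchanged: `T(S₅ f(c)) = α |0001⟩ ⊗ (c(0)|0⟩ + c(1)|1⟩)` with `α ≠ 0` independent of `c`. -/
theorem phase_flip_qubit5_syndrome :
    ∃ α : ℂ, α ≠ 0 ∧ ∀ c : Fin 2 → ℂ,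
      dec (phaseFlip 4 (enc c)) = α • synData ![0, 0, 0, 1] (c 0) (c 1) := by
  refine ⟨32, by norm_num, fun c => ?_⟩
  ext z
  rw [eta5 z]
  simp only [dec, phaseFlip, enc, WithLp.ofLp_toLp, PiLp.smul_apply]
  rw [sum_pi5]
  generalize z 4 = v4; generalize z 3 = v3; generalize z 2 = v2
  generalize z 1 = v1; generalize z 0 = v0
  fin_cases v0 <;> fin_cases v1 <;> fin_cases v2 <;> fin_cases v3 <;> fin_cases v4 <;>
  · simp only [theta, gam, Fin.sum_univ_two,
      Matrix.cons_val_zero, Matrix.cons_val_one, Matrix.head_cons,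
      Matrix.cons_val_fin_one, Fin.isValue, Matrix.cons_val,
      Pi.smul_apply, smul_eq_mul]
    norm_num [synData_apply]
    try ring
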